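/- Let E be a finite set, a, b : E → ℝ≥0, ε ∈ [0,1], and f, f* : E → ℝ≥0 satisfying Σ_e (a(e)f(e)² + b(e)f(e)/(1+ε)) ≤ Σ_e (a(e)f(e)f*(e) + b(e)f*(e)/(1+ε)). Then Σ_e (a(e)f(e)² + b(e)f(e)) ≤ (4/((3−ε)(1+ε)))·Σ_e (a(e)f*(e)² + b(e)f*(e)). -/

import Mathlib

theorem stmt_19 {E : Type*} [Fintype E] (ε : ℝ) (h0 : 0 ≤ ε) (h1 : ε ≤ 1)
    (a b f g : E → ℝ) (ha : ∀ e, 0 ≤ a e) (hb : ∀ e, 0 ≤ b e)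
    (hf : ∀ e, 0 ≤ f e) (hg : ∀ e, 0 ≤ g e)
    (h : ∑ e : E, (a e * f e ^ 2 + b e * f e / (1 + ε)) ≤
      ∑ e : E, (a e * f e * g e + b e * g e / (1 + ε))) :
    ∑ e : E, (a e * f e ^ 2 + b e * f e) ≤
      (4 / ((3 - ε) * (1 + ε))) * ∑ e : E, (a e * g e ^ 2 + b e * g e) := by
  have hD : (0:ℝ) < 1 + ε := by linarith
  have hK : (0:ℝ) < 3 - ε := by linarith
  have hKD : (0:ℝ) < (3 - ε) * (1 + ε) := mul_pos hK hD
  -- abbreviate sums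
  set A1 := ∑ e : E, a e * f e ^ 2 with hA1
  set B1 := ∑ e : E, b e * f e with hB1
  set C := ∑ e : E, a e * f e * g e with hC
  set A2 := ∑ e : E, a e * g e ^ 2 with hA2
  set B2 := ∑ e : E, b e * g e with hB2
  have hsplit : ∀ (u v : E → ℝ), ∑ e : E, (u e + v e / (1 + ε)) =
      (∑ e : E, u e) + (∑ e : E, v e) / (1 + ε) := by
    intro u v
    rw [Finset.sum_add_distrib, Finset.sum_div]
  have h' : A1 + B1 / (1 + ε) ≤ C + B2 / (1 + ε) := by
    have e1 := hsplit (fun e => a e * f e ^ 2) (fun e => b e * f e)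
    have e2 := hsplit (fun e => a e * f e * g e) (fun e => b e * g e)
    simpa [hA1, hB1, hC, hB2, e1, e2] using h
  -- pointwise key inequality summed
  have key : C ≤ (1 + ε) / 4 * A1 + 1 / (1 + ε) * A2 := by
    have : C ≤ ∑ e : E, ((1 + ε) / 4 * (a e * f e ^ 2) + 1 / (1 + ε) * (a e * g e ^ 2)) := by
      apply Finset.sum_le_sum
      intro e _
      have hfg : f e * g e ≤ (1 + ε) / 4 * f e ^ 2 + 1 / (1 + ε) * g e ^ 2 := by
        rw [← sub_nonneg]
        have heq : (1 + ε) / 4 * f e ^ 2 + 1 / (1 + ε) * g e ^ 2 - f e * g e =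
            ((1 + ε) * f e - 2 * g e) ^ 2 / (4 * (1 + ε)) := by
          field_simp
          ring
        rw [heq]
        positivity
      have := mul_le_mul_of_nonneg_left hfg (ha e)
      nlinarith [this]
    calc C ≤ ∑ e : E, ((1 + ε) / 4 * (a e * f e ^ 2) + 1 / (1 + ε) * (a e * g e ^ 2)) := this
      _ = (1 + ε) / 4 * A1 + 1 / (1 + ε) * A2 := by
          rw [Finset.sum_add_distrib, ← Finset.mul_sum, ← Finset.mul_sum]
  -- nonnegativity of sums
  have hA1n : 0 ≤ A1 := Finset.sum_nonneg fun e _ => mul_nonneg (ha e) (sq_nonneg _)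
  have hB1n : 0 ≤ B1 := Finset.sum_nonneg fun e _ => mul_nonneg (hb e) (hf e)
  have hA2n : 0 ≤ A2 := Finset.sum_nonneg fun e _ => mul_nonneg (ha e) (sq_nonneg _)
  have hB2n : 0 ≤ B2 := Finset.sum_nonneg fun e _ => mul_nonneg (hb e) (hg e)
  -- clear denominators in h'
  have e1 : (1 + ε) * A1 + B1 ≤ (1 + ε) * C + B2 := by
    have h2 := mul_le_mul_of_nonneg_left h' hD.le
    have l1 : (1 + ε) * (A1 + B1 / (1 + ε)) = (1 + ε) * A1 + B1 := by field_simp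
    have l2 : (1 + ε) * (C + B2 / (1 + ε)) = (1 + ε) * C + B2 := by field_simp
    linarith [h2, l1.ge, l2.le]
  -- clear denominators in key
  have e2 : (1 + ε) * C ≤ (1 + ε) ^ 2 / 4 * A1 + A2 := by
    have h2 := mul_le_mul_of_nonneg_left key hD.le
    have l2 : (1 + ε) * ((1 + ε) / 4 * A1 + 1 / (1 + ε) * A2) = (1 + ε) ^ 2 / 4 * A1 + A2 := by
      field_simp
    linarith [h2, l2.le]
  -- main conclusion
  rw [div_mul_eq_mul_div, le_div_iff₀ hKD, Finset.sum_add_distrib, Finset.sum_add_distrib]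
  nlinarith [e1, e2, hA1n, hB1n, hA2n, hB2n, mul_nonneg (sq_nonneg (1 - ε)) hB1n]
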